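/- Finite-sample cancellation identity for the one-step estimator (equation (2) of the paper): Let n ≥ 1, let (y_i, a_i, w_i) ∈ ℝ × ℝ × 𝒲 for i = 1, …, n, let μ : ℝ × 𝒲 → ℝ be any function and g : ℝ × 𝒲 → ℝ any nowhere-zero function, and fix a₀ ∈ ℝ. Define F_n(a₀) := (1/n) Σ_{i=1}^n 1{a_i ≤ a₀}, θ_n(a) := (1/n) Σ_{j=1}^n μ(a, w_j), γ_n := (1/n²) Σ_{i,j=1}^n μ(a_i, w_j), Ω_n^{plug}(a₀) := (1/n²) Σ_{i,j=1}^n [1{a_i ≤ a₀} − F_n(a₀)] μ(a_i, w_j), and D*_n(y, a, w) := [1{a ≤ a₀} − F_n(a₀)]·[(y − μ(a,w))/g(a,w) + θ_n(a) − γ_n] + (1/n) Σ_{j=1}^n [1{a_j ≤ a₀} − F_n(a₀)] μ(a_j, w) − 2·Ω_n^{plug}(a₀). Then Ω_n^{plug}(a₀) + (1/n) Σ_{i=1}^n D*_n(y_i, a_i, w_i) = (1/n) Σ_{i=1}^n [1{a_i ≤ a₀} − F_n(a₀)]·[(y_i − μ(a_i, w_i))/g(a_i, w_i) + (1/n) Σ_{j=1}^n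 μ(a_i, w_j)]. -/

import Mathlib

open Finset

/-- Indicator `1{a ≤ a₀}`. -/
noncomputable def indLe (a₀ a : ℝ) : ℝ := if a ≤ a₀ then 1 else 0

/-- Empirical CDF `F_n(a₀)`. -/
noncomputable def empCdf (n : ℕ) (a : Fin n → ℝ) (a₀ : ℝ) : ℝ :=
  (n : ℝ)⁻¹ * ∑ i, indLe a₀ (a i)

/-- `θ_n(x) := (1/n) Σ_j μ(x, w_j)`. -/
noncomputable def thetaN {𝒲 : Type*} (n : ℕ) (w : Fin n → 𝒲) (μ : ℝ → 𝒲 → ℝ) (x : ℝ) : ℝ :=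
  (n : ℝ)⁻¹ * ∑ j, μ x (w j)

/-- `γ_n := (1/n²) Σ_{i,j} μ(a_i, w_j)`. -/
noncomputable def gammaN {𝒲 : Type*} (n : ℕ) (a : Fin n → ℝ) (w : Fin n → 𝒲)
    (μ : ℝ → 𝒲 → ℝ) : ℝ :=
  ((n : ℝ) ^ 2)⁻¹ * ∑ i, ∑ j, μ (a i) (w j)

/-- Plug-in estimator `Ω_n^{plug}(a₀)`. -/
noncomputable def omegaPlug {𝒲 : Type*} (n : ℕ) (a : Fin n → ℝ) (w : Fin n → 𝒲)
    (μ : ℝ → 𝒲 → ℝ) (a₀ : ℝ) : ℝ :=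
  ((n : ℝ) ^ 2)⁻¹ * ∑ i, ∑ j, (indLe a₀ (a i) - empCdf n a a₀) * μ (a i) (w j)

/-- Estimated influence function `D*_n(y, x, v)`. -/
noncomputable def DstarN {𝒲 : Type*} (n : ℕ) (a : Fin n → ℝ) (w : Fin n → 𝒲)
    (μ g : ℝ → 𝒲 → ℝ) (a₀ y x : ℝ) (v : 𝒲) : ℝ :=
  (indLe a₀ x - empCdf n a a₀)
      * ((y - μ x v) / g x v + thetaN n w μ x - gammaN n a w μ)
    + (n : ℝ)⁻¹ * ∑ j, (indLe a₀ (a j) - empCdf n a a₀) * μ (a j) v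
    - 2 * omegaPlug n a w μ a₀

/-- Finite-sample cancellation identity for the one-step estimator (equation (2)). -/
theorem one_step_cancellation_identity
    {𝒲 : Type*} (n : ℕ) (hn : 1 ≤ n) (y a : Fin n → ℝ) (w : Fin n → 𝒲)
    (μ : ℝ → 𝒲 → ℝ) (g : ℝ → 𝒲 → ℝ) (hg : ∀ x v, g x v ≠ 0) (a₀ : ℝ) :
    omegaPlug n a w μ a₀ + (n : ℝ)⁻¹ * ∑ i, DstarN n a w μ g a₀ (y i) (a i) (w i)
      = (n : ℝ)⁻¹ * ∑ i, (indLe a₀ (a i) - empCdf n a a₀)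
          * ((y i - μ (a i) (w i)) / g (a i) (w i)
            + (n : ℝ)⁻¹ * ∑ j, μ (a i) (w j)) := by
  have hn0 : (n : ℝ) ≠ 0 := Nat.cast_ne_zero.mpr (by omega)
  set c : Fin n → ℝ := fun i => indLe a₀ (a i) - empCdf n a a₀ with hcdef
  have hc : ∑ i, c i = 0 := by
    simp only [hcdef, Finset.sum_sub_distrib, Finset.sum_const, card_univ,
      Fintype.card_fin, nsmul_eq_mul, empCdf]
    field_simp
    ring
  -- sum of γ-terms vanishes
  have hγ : ∑ i, c i * gammaN n a w μ = 0 := by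
    rw [← Finset.sum_mul, hc, zero_mul]
  -- double-sum term equals Ω
  have hΩ : (n : ℝ)⁻¹ * ∑ i, ((n : ℝ)⁻¹ * ∑ j, c j * μ (a j) (w i))
      = omegaPlug n a w μ a₀ := by
    rw [omegaPlug, ← Finset.mul_sum, Finset.sum_comm]
    ring
  -- θ matches the inner mean
  have hθ : ∀ i, thetaN n w μ (a i) = (n : ℝ)⁻¹ * ∑ j, μ (a i) (w j) := fun i => rfl
  have hD : ∀ i, DstarN n a w μ g a₀ (y i) (a i) (w i)
      = c i * ((y i - μ (a i) (w i)) / g (a i) (w i) + (n : ℝ)⁻¹ * ∑ j, μ (a i) (w j))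
        - c i * gammaN n a w μ
        + (n : ℝ)⁻¹ * ∑ j, c j * μ (a j) (w i)
        - 2 * omegaPlug n a w μ a₀ := by
    intro i
    rw [DstarN, hθ]
    ring
  rw [Finset.sum_congr rfl (fun i _ => hD i)]
  simp only [Finset.sum_sub_distrib, Finset.sum_add_distrib, hγ,
    Finset.sum_const, card_univ, Fintype.card_fin, nsmul_eq_mul]
  rw [mul_sub, mul_add, mul_sub, hΩ]
  field_simp
  ring
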